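/- Let (X_m) be a birth-death chain on ℕ started at k ≥ 1 with up-probabilities r_n and l_n = 1 − r_n, 0 absorbing, and suppose ∑_{j=0}^∞ t_j < ∞ where t_0 = 1, t_n = ∏_{i=1}^n (l_i/r_i). Then with positive probability X_m → ∞ as m → ∞ (the chain never goes extinct), and this probability equals (∑_{j=0}^{k−1} t_j)/(∑_{j=0}^∞ t_j). -/

import Mathlib

set_option linter.unusedSectionVars false

open MeasureTheory ProbabilityTheory Filter Set
open scoped ENNReal Topology

structure IsBirthDeathChain {Ω : Type*} [MeasurableSpace Ω] (μ : Measure Ω)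
    (X : ℕ → Ω → ℕ) (r : ℕ → ℝ) (k : ℕ) : Prop where
  isProb : IsProbabilityMeasure μ
  meas : ∀ m, Measurable (X m)
  start : ∀ᵐ ω ∂μ, X 0 ω = k
  step_up : ∀ (m : ℕ) (path : ℕ → ℕ), 0 < path m →
    μ (⋂ i ∈ Finset.range (m + 1), {ω | X i ω = path i}) ≠ 0 →
    μ[{ω | X (m + 1) ω = path m + 1} | ⋂ i ∈ Finset.range (m + 1), {ω | X i ω = path i}]
      = ENNReal.ofReal (r (path m))
  step_down : ∀ (m : ℕ) (path : ℕ → ℕ), 0 < path m →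
    μ (⋂ i ∈ Finset.range (m + 1), {ω | X i ω = path i}) ≠ 0 →
    μ[{ω | X (m + 1) ω = path m - 1} | ⋂ i ∈ Finset.range (m + 1), {ω | X i ω = path i}]
      = ENNReal.ofReal (1 - r (path m))
  absorb : ∀ (m : ℕ) (path : ℕ → ℕ), path m = 0 →
    μ (⋂ i ∈ Finset.range (m + 1), {ω | X i ω = path i}) ≠ 0 →
    μ[{ω | X (m + 1) ω = 0} | ⋂ i ∈ Finset.range (m + 1), {ω | X i ω = path i}] = 1

namespace BDproof

variable {Ω : Type*} [MeasurableSpace Ω]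

/-- cylinder set -/
def cyl (X : ℕ → Ω → ℕ) (p : ℕ → ℕ) (m : ℕ) : Set Ω :=
  ⋂ i ∈ Finset.range (m + 1), {ω | X i ω = p i}

lemma mem_cyl {X : ℕ → Ω → ℕ} {p : ℕ → ℕ} {m : ℕ} {ω : Ω} :
    ω ∈ cyl X p m ↔ ∀ i ≤ m, X i ω = p i := by
  simp [cyl, Nat.lt_succ_iff]

lemma cyl_measurable {X : ℕ → Ω → ℕ} (hm : ∀ i, Measurable (X i)) (p : ℕ → ℕ) (m : ℕ) :
    MeasurableSet (cyl X p m) :=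
  Finset.measurableSet_biInter _ fun i _ => (hm i) (measurableSet_singleton (p i))

lemma cyl_congr {X : ℕ → Ω → ℕ} {p p' : ℕ → ℕ} {m : ℕ} (h : ∀ i ≤ m, p i = p' i) :
    cyl X p m = cyl X p' m := by
  ext ω; simp only [mem_cyl]
  exact ⟨fun H i hi => (H i hi).trans (h i hi), fun H i hi => (H i hi).trans (h i hi).symm⟩

lemma cyl_antitone {X : ℕ → Ω → ℕ} (p : ℕ → ℕ) {m m' : ℕ} (h : m ≤ m') :
    cyl X p m' ⊆ cyl X p m := fun ω hω => by
  rw [mem_cyl] at *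
  exact fun i hi => hω i (hi.trans h)


lemma meas_level {X : ℕ → Ω → ℕ} (hm : ∀ i, Measurable (X i)) (i b : ℕ) :
    MeasurableSet {ω | X i ω = b} := (hm i) (measurableSet_singleton b)

/-- one-step transition probability -/
noncomputable def q (r : ℕ → ℝ) (a b : ℕ) : ℝ :=
  if a = 0 then (if b = 0 then 1 else 0)
  else if b = a + 1 then r a else if b = a - 1 then 1 - r a else 0

noncomputable def Q (r : ℕ → ℝ) (a b : ℕ) : ℝ≥0∞ := ENNReal.ofReal (q r a b)

variable {μ : Measure Ω} {X : ℕ → Ω → ℕ} {r : ℕ → ℝ} {k : ℕ}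

/-- The fundamental one-step lemma. -/
lemma cyl_succ (hr : ∀ n, 1 ≤ n → r n ∈ Set.Ioo (0 : ℝ) 1) (hX : IsBirthDeathChain μ X r k)
    (p : ℕ → ℕ) (m : ℕ) :
    μ (cyl X p (m + 1)) = Q r (p m) (p (m + 1)) * μ (cyl X p m) := by
  have hfin : μ (cyl X p m) ≠ ⊤ := by
    have := hX.isProb
    exact (measure_lt_top μ _).ne
  by_cases h0 : μ (cyl X p m) = 0
  · rw [h0, mul_zero]
    exact measure_mono_null (cyl_antitone p (Nat.le_succ m)) h0
  have hmeas : MeasurableSet (cyl X p m) := cyl_measurable hX.meas p m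
  have key : ∀ b : ℕ, μ[{ω | X (m+1) ω = b} | cyl X p m] = Q r (p m) b →
      μ (cyl X p (m+1)) = Q r (p m) (p (m+1)) * μ (cyl X p m) → True := fun _ _ _ => trivial
  -- expansion: cyl X p (m+1) = cyl X p m ∩ {ω | X (m+1) ω = p (m+1)}
  have hsplit : cyl X p (m + 1) = cyl X p m ∩ {ω | X (m + 1) ω = p (m + 1)} := by
    ext ω
    simp only [mem_cyl, Set.mem_inter_iff, Set.mem_setOf_eq]
    constructor
    · intro H; exact ⟨fun i hi => H i (hi.trans (Nat.le_succ m)), H (m+1) le_rfl⟩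
    · rintro ⟨H, h2⟩ i hi
      rcases Nat.lt_succ_iff_lt_or_eq.mp (Nat.lt_succ_of_le hi) with h | h
      · exact H i (Nat.lt_succ_iff.mp h)
      · subst h; exact h2
  -- from cond
  have cond_eq : ∀ (A : Set Ω), μ[A | cyl X p m] = (μ (cyl X p m))⁻¹ * μ (cyl X p m ∩ A) :=
    fun A => ProbabilityTheory.cond_apply hmeas μ A
  have inter_eq : ∀ (A : Set Ω) (v : ℝ≥0∞), μ[A | cyl X p m] = v →
      μ (cyl X p m ∩ A) = v * μ (cyl X p m) := by
    intro A v hv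
    rw [cond_eq] at hv
    calc μ (cyl X p m ∩ A) = (μ (cyl X p m) * (μ (cyl X p m))⁻¹) * μ (cyl X p m ∩ A) := by
          rw [ENNReal.mul_inv_cancel h0 hfin, one_mul]
      _ = μ (cyl X p m) * ((μ (cyl X p m))⁻¹ * μ (cyl X p m ∩ A)) := by ring
      _ = v * μ (cyl X p m) := by rw [← hv]; ring
  rw [hsplit]
  rcases Nat.eq_zero_or_pos (p m) with ha | ha
  · -- absorbed
    have habs := hX.absorb m p ha h0
    have h00 : μ (cyl X p m ∩ {ω | X (m+1) ω = 0}) = 1 * μ (cyl X p m) := inter_eq _ _ habs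
    rw [one_mul] at h00
    by_cases hb : p (m + 1) = 0
    · rw [hb, h00, Q, q, if_pos ha, if_pos rfl, ENNReal.ofReal_one, one_mul]
    · -- other value: null
      have hsub : cyl X p m ∩ {ω | X (m+1) ω = p (m+1)} ⊆
          cyl X p m \ (cyl X p m ∩ {ω | X (m+1) ω = 0}) := by
        rintro ω ⟨h1, h2⟩
        refine ⟨h1, fun hmem => hb ?_⟩
        rw [← h2]; exact hmem.2.symm ▸ (by simpa using h2.symm.trans hmem.2)
      have : μ (cyl X p m \ (cyl X p m ∩ {ω | X (m+1) ω = 0})) = 0 := by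
        have hd := measure_diff (μ := μ) (Set.inter_subset_left)
          ((hmeas.inter (meas_level hX.meas (m+1) 0)).nullMeasurableSet) (h00 ▸ hfin)
        rw [hd, h00, tsub_self]
      have := measure_mono_null hsub this
      rw [this, Q, q, if_pos ha, if_neg hb, ENNReal.ofReal_zero, zero_mul]
  · -- positive state
    have ha' : p m ≠ 0 := Nat.pos_iff_ne_zero.mp ha
    have hrr := hr (p m) ha
    have hup := inter_eq _ _ (hX.step_up m p ha h0)
    have hdn := inter_eq _ _ (hX.step_down m p ha h0)
    by_cases hb1 : p (m + 1) = p m + 1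
    · rw [hb1, hup, Q, q, if_neg ha', if_pos rfl]
    by_cases hb2 : p (m + 1) = p m - 1
    · rw [hb2, hdn, Q, q, if_neg ha', if_neg (by omega), if_pos rfl]
    · -- other b : null
      have hne : (p m + 1 : ℕ) ≠ p m - 1 := by omega
      have hdisj : Disjoint (cyl X p m ∩ {ω | X (m+1) ω = p m + 1})
          (cyl X p m ∩ {ω | X (m+1) ω = p m - 1}) := by
        refine Set.disjoint_left.mpr ?_
        rintro ω ⟨_, h1⟩ ⟨_, h2⟩
        exact hne (h1.symm.trans h2)
      have hU : μ (cyl X p m ∩ {ω | X (m+1) ω = p m + 1} ∪ cyl X p m ∩ {ω | X (m+1) ω = p m - 1})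
          = μ (cyl X p m) := by
        rw [measure_union hdisj (hmeas.inter ((hX.meas (m+1)) (measurableSet_singleton _))),
          hup, hdn, ← add_mul, ← ENNReal.ofReal_add hrr.1.le (by linarith [hrr.2]),
          add_sub_cancel, ENNReal.ofReal_one, one_mul]
      have hsub : cyl X p m ∩ {ω | X (m+1) ω = p (m+1)} ⊆
          cyl X p m \ (cyl X p m ∩ {ω | X (m+1) ω = p m + 1} ∪ cyl X p m ∩ {ω | X (m+1) ω = p m - 1}) := by
        rintro ω ⟨h1, h2⟩
        refine ⟨h1, fun hmem => ?_⟩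
        rcases hmem with ⟨_, h3⟩ | ⟨_, h3⟩
        · exact hb1 (h2.symm.trans h3)
        · exact hb2 (h2.symm.trans h3)
      have hnull : μ (cyl X p m \ (cyl X p m ∩ {ω | X (m+1) ω = p m + 1} ∪ cyl X p m ∩ {ω | X (m+1) ω = p m - 1})) = 0 := by
        have hd := measure_diff (μ := μ)
          (Set.union_subset Set.inter_subset_left Set.inter_subset_left)
          (((hmeas.inter (meas_level hX.meas (m+1) (p m + 1))).union
            (hmeas.inter (meas_level hX.meas (m+1) (p m - 1)))).nullMeasurableSet)
          (hU ▸ hfin)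
        rw [hd, hU, tsub_self]
      rw [measure_mono_null hsub hnull, Q, q, if_neg ha', if_neg hb1, if_neg hb2,
        ENNReal.ofReal_zero, zero_mul]

/-- extend a finite path to ℕ → ℕ -/
def ofFin (m : ℕ) (p : Fin (m + 1) → ℕ) : ℕ → ℕ :=
  fun i => p ⟨min i m, Nat.lt_succ_of_le (Nat.min_le_right i m)⟩

lemma ofFin_eq (m : ℕ) (p : Fin (m + 1) → ℕ) {i : ℕ} (hi : i ≤ m) :
    ofFin m p i = p ⟨i, Nat.lt_succ_of_le hi⟩ := by
  simp only [ofFin]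
  congr 1
  exact Fin.ext (by simpa using Nat.min_eq_left hi)

lemma cyl_measurable0 {X : ℕ → Ω → ℕ} (hm : ∀ i, Measurable (X i)) (p : ℕ → ℕ) (m : ℕ) :
    MeasurableSet (cyl X p m) :=
  Finset.measurableSet_biInter _ fun i _ => (hm i) (measurableSet_singleton (p i))

/-- master partition lemma -/
lemma master {μ : Measure Ω} {X : ℕ → Ω → ℕ} (hm : ∀ i, Measurable (X i))
    {S : Set Ω} (hS : MeasurableSet S) (m : ℕ) :
    μ S = ∑' p : Fin (m + 1) → ℕ, μ (S ∩ cyl X (ofFin m p) m) := by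
  have hcover : S = ⋃ p : Fin (m + 1) → ℕ, S ∩ cyl X (ofFin m p) m := by
    ext ω
    constructor
    · intro hω
      refine Set.mem_iUnion.mpr ⟨fun i => X i ω, hω, ?_⟩
      rw [mem_cyl]
      intro i hi
      rw [ofFin_eq m _ hi]
    · rintro hω
      rcases Set.mem_iUnion.mp hω with ⟨p, hp, _⟩
      exact hp
  have hdisj : Pairwise (Function.onFun Disjoint
      (fun p : Fin (m+1) → ℕ => S ∩ cyl X (ofFin m p) m)) := by
    intro p p' hne
    refine Set.disjoint_left.mpr ?_
    rintro ω ⟨_, h1⟩ ⟨_, h2⟩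
    apply hne
    funext i
    have e1 := (mem_cyl.mp h1) i (Nat.lt_succ_iff.mp i.isLt)
    have e2 := (mem_cyl.mp h2) i (Nat.lt_succ_iff.mp i.isLt)
    rw [ofFin_eq m p (Nat.lt_succ_iff.mp i.isLt)] at e1
    rw [ofFin_eq m p' (Nat.lt_succ_iff.mp i.isLt)] at e2
    have : p ⟨(i : ℕ), i.isLt⟩ = p' ⟨(i : ℕ), i.isLt⟩ := e1 ▸ e2 ▸ rfl
    simpa using this
  calc μ S = μ (⋃ p : Fin (m + 1) → ℕ, S ∩ cyl X (ofFin m p) m) := by rw [← hcover]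
    _ = ∑' p : Fin (m + 1) → ℕ, μ (S ∩ cyl X (ofFin m p) m) :=
        measure_iUnion hdisj fun p => hS.inter (cyl_measurable0 hm _ m)

/-- snoc equivalence for reindexing -/
def pathEquiv (m : ℕ) : (Fin (m + 2) → ℕ) ≃ ((Fin (m + 1) → ℕ) × ℕ) where
  toFun p := (fun i => p i.castSucc, p (Fin.last (m + 1)))
  invFun q := Fin.snoc q.1 q.2
  left_inv p := by
    funext i
    induction i using Fin.lastCases with
    | last => simp
    | cast i => simp
  right_inv q := by
    ext i
    · simp
    · simp

lemma ofFin_snoc_le (m : ℕ) (p : Fin (m + 1) → ℕ) (b : ℕ) {i : ℕ} (hi : i ≤ m) :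
    ofFin (m + 1) (Fin.snoc p b) i = ofFin m p i := by
  rw [ofFin_eq (m+1) _ (hi.trans (Nat.le_succ m)), ofFin_eq m p hi]
  have : (⟨i, Nat.lt_succ_of_le (hi.trans (Nat.le_succ m))⟩ : Fin (m+2))
      = Fin.castSucc ⟨i, Nat.lt_succ_of_le hi⟩ := rfl
  rw [this, Fin.snoc_castSucc]

lemma ofFin_snoc_last (m : ℕ) (p : Fin (m + 1) → ℕ) (b : ℕ) :
    ofFin (m + 1) (Fin.snoc p b) (m + 1) = b := by
  rw [ofFin_eq (m+1) _ le_rfl]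
  have : (⟨m+1, Nat.lt_succ_of_le le_rfl⟩ : Fin (m+2)) = Fin.last (m+1) := rfl
  rw [this, Fin.snoc_last]

lemma cyl_succ_split {X : ℕ → Ω → ℕ} (p : ℕ → ℕ) (m : ℕ) :
    cyl X p (m + 1) = cyl X p m ∩ {ω | X (m + 1) ω = p (m + 1)} := by
  ext ω
  simp only [mem_cyl, Set.mem_inter_iff, Set.mem_setOf_eq]
  constructor
  · intro H; exact ⟨fun i hi => H i (hi.trans (Nat.le_succ m)), H (m+1) le_rfl⟩
  · rintro ⟨H, h2⟩ i hi
    rcases Nat.lt_succ_iff_lt_or_eq.mp (Nat.lt_succ_of_le hi) with h | h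
    · exact H i (Nat.lt_succ_iff.mp h)
    · subst h; exact h2

lemma cyl_snoc {X : ℕ → Ω → ℕ} (m : ℕ) (p : Fin (m + 1) → ℕ) (b : ℕ) :
    cyl X (ofFin (m + 1) (Fin.snoc p b)) (m + 1)
      = cyl X (ofFin m p) m ∩ {ω | X (m + 1) ω = b} := by
  rw [cyl_succ_split, ofFin_snoc_last]
  congr 1
  apply cyl_congr
  intro i hi
  exact ofFin_snoc_le m p b hi


section Part3
variable {μ : Measure Ω} {X : ℕ → Ω → ℕ} {r : ℕ → ℝ} {k : ℕ}

lemma start_meas (hX : IsBirthDeathChain μ X r k) (b : ℕ) :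
    μ {ω | X 0 ω = b} = if b = k then 1 else 0 := by
  have := hX.isProb
  have h0 : μ {ω | ¬ X 0 ω = k} = 0 := hX.start
  by_cases hb : b = k
  · subst hb
    rw [if_pos rfl]
    have hm : MeasurableSet {ω | X 0 ω = b} := meas_level hX.meas 0 b
    have h2 := measure_add_measure_compl (μ := μ) hm
    have hc : μ {ω | X 0 ω = b}ᶜ = 0 := h0
    rw [hc, add_zero, measure_univ] at h2
    exact h2
  · rw [if_neg hb]
    refine measure_mono_null ?_ h0
    intro ω hω
    simp only [Set.mem_setOf_eq] at *
    rw [hω]; exact fun h => hb h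

lemma cyl_zero {p : ℕ → ℕ} : cyl X p 0 = {ω | X 0 ω = p 0} := by
  ext ω; simp [mem_cyl, Nat.le_zero]

lemma q_nonneg (hr : ∀ n, 1 ≤ n → r n ∈ Set.Ioo (0 : ℝ) 1) (a b : ℕ) : 0 ≤ q r a b := by
  unfold q
  rcases Nat.eq_zero_or_pos a with h | h
  · rw [if_pos h]; split <;> norm_num
  · have h1 := hr a h
    rw [if_neg (Nat.pos_iff_ne_zero.mp h)]
    split
    · exact h1.1.le
    · split
      · linarith [h1.2]
      · exact le_rfl

lemma Q_up (hr : ∀ n, 1 ≤ n → r n ∈ Set.Ioo (0 : ℝ) 1) {a : ℕ} (ha : 1 ≤ a) :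
    Q r a (a + 1) = ENNReal.ofReal (r a) := by
  unfold Q q
  rw [if_neg (by omega : ¬ a = 0), if_pos rfl]

lemma Q_down {a : ℕ} (ha : 1 ≤ a) :
    Q r a (a - 1) = ENNReal.ofReal (1 - r a) := by
  unfold Q q
  rw [if_neg (by omega : ¬ a = 0), if_neg (by omega : ¬ a - 1 = a + 1), if_pos rfl]

lemma Q_other {a b : ℕ} (ha : 1 ≤ a) (h1 : b ≠ a + 1) (h2 : b ≠ a - 1) :
    Q r a b = 0 := by
  unfold Q q
  rw [if_neg (by omega : ¬ a = 0), if_neg h1, if_neg h2, ENNReal.ofReal_zero]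

lemma Q_le_one (hr : ∀ n, 1 ≤ n → r n ∈ Set.Ioo (0 : ℝ) 1) (a b : ℕ) : Q r a b ≤ 1 := by
  unfold Q q
  rcases Nat.eq_zero_or_pos a with h | h
  · rw [if_pos h]; split
    · simp
    · simp
  · have h1 := hr a h
    rw [if_neg (Nat.pos_iff_ne_zero.mp h)]
    split
    · exact ENNReal.ofReal_le_one.mpr h1.2.le
    · split
      · exact ENNReal.ofReal_le_one.mpr (by linarith [h1.1])
      · simp

-- phi and Phi
def phi (t : ℕ → ℝ) (n : ℕ) : ℝ := ∑ j ∈ Finset.range n, t j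

noncomputable def Phi (t : ℕ → ℝ) (n : ℕ) : ℝ≥0∞ := ENNReal.ofReal (phi t n)

lemma phi_nonneg {t : ℕ → ℝ} (hpos : ∀ j, 0 < t j) (n : ℕ) : 0 ≤ phi t n :=
  Finset.sum_nonneg fun j _ => (hpos j).le

lemma phi_mono {t : ℕ → ℝ} (hpos : ∀ j, 0 < t j) : Monotone (phi t) := by
  intro a b hab
  exact Finset.sum_le_sum_of_subset_of_nonneg (Finset.range_subset_range.mpr hab)
    (fun j _ _ => (hpos j).le)

lemma Phi_zero {t : ℕ → ℝ} : Phi t 0 = 0 := by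
  simp [Phi, phi]

lemma Phi_mono {t : ℕ → ℝ} (hpos : ∀ j, 0 < t j) {a b : ℕ} (h : a ≤ b) :
    Phi t a ≤ Phi t b := ENNReal.ofReal_le_ofReal (phi_mono hpos h)

lemma Phi_ne_top {t : ℕ → ℝ} (n : ℕ) : Phi t n ≠ ⊤ := ENNReal.ofReal_ne_top

lemma phi_harmonic {t : ℕ → ℝ}
    (hrec : ∀ a, 1 ≤ a → r a * t a = (1 - r a) * t (a - 1))
    {a : ℕ} (ha : 1 ≤ a) :
    phi t a = r a * phi t (a + 1) + (1 - r a) * phi t (a - 1) := by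
  obtain ⟨a', rfl⟩ : ∃ a', a = a' + 1 := ⟨a - 1, by omega⟩
  have hr1 := hrec (a' + 1) (by omega)
  simp only [Nat.add_sub_cancel] at hr1 ⊢
  have e1 : phi t (a' + 1) = phi t a' + t a' := Finset.sum_range_succ t a'
  have e2 : phi t (a' + 1 + 1) = phi t a' + t a' + t (a' + 1) := by
    have := Finset.sum_range_succ t (a' + 1)
    rw [phi, this, ← e1]; rfl
  rw [e2, e1]
  linear_combination -hr1

lemma Phi_harmonic {t : ℕ → ℝ} (hr : ∀ n, 1 ≤ n → r n ∈ Set.Ioo (0 : ℝ) 1)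
    (hpos : ∀ j, 0 < t j)
    (hrec : ∀ a, 1 ≤ a → r a * t a = (1 - r a) * t (a - 1))
    {a : ℕ} (ha : 1 ≤ a) :
    Phi t a = Q r a (a + 1) * Phi t (a + 1) + Q r a (a - 1) * Phi t (a - 1) := by
  have h1 := hr a ha
  rw [Q_up hr ha, Q_down ha, Phi, Phi, Phi, phi_harmonic hrec ha,
    ENNReal.ofReal_add (mul_nonneg h1.1.le (phi_nonneg hpos _))
      (mul_nonneg (by linarith [h1.2]) (phi_nonneg hpos _)),
    ENNReal.ofReal_mul h1.1.le, ENNReal.ofReal_mul (by linarith [h1.2] : (0:ℝ) ≤ 1 - r a)]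

-- the interior set
def Gset (X : ℕ → Ω → ℕ) (N m : ℕ) : Set Ω := {ω | ∀ i ≤ m, 0 < X i ω ∧ X i ω < N}

lemma Gset_measurable (hm : ∀ i, Measurable (X i)) (N m : ℕ) :
    MeasurableSet (Gset X N m) := by
  have : Gset X N m = ⋂ i ∈ Finset.range (m + 1), (X i) ⁻¹' {n | 0 < n ∧ n < N} := by
    ext ω; simp [Gset, Nat.lt_succ_iff]
  rw [this]
  exact Finset.measurableSet_biInter _ fun i _ => (hm i) trivial

lemma Gset_succ (N m : ℕ) :
    Gset X N (m + 1) = Gset X N m ∩ {ω | 0 < X (m + 1) ω ∧ X (m + 1) ω < N} := by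
  ext ω
  simp only [Gset, Set.mem_inter_iff, Set.mem_setOf_eq]
  constructor
  · intro H; exact ⟨fun i hi => H i (hi.trans (Nat.le_succ m)), H (m + 1) le_rfl⟩
  · rintro ⟨H, h2⟩ i hi
    rcases Nat.lt_succ_iff_lt_or_eq.mp (Nat.lt_succ_of_le hi) with h | h
    · exact H i (Nat.lt_succ_iff.mp h)
    · subst h; exact h2

lemma Gset_antitone {N m m' : ℕ} (h : m ≤ m') : Gset X N m' ⊆ Gset X N m :=
  fun ω hω i hi => hω i (hi.trans h)

/-- dichotomy for interior intersections -/
lemma G_inter_cyl (p : ℕ → ℕ) (N m : ℕ) :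
    Gset X N m ∩ cyl X p m = ∅ ∨
      ((∀ i ≤ m, 0 < p i ∧ p i < N) ∧ Gset X N m ∩ cyl X p m = cyl X p m) := by
  by_cases hne : (Gset X N m ∩ cyl X p m).Nonempty
  · right
    obtain ⟨ω, hG, hc⟩ := hne
    have hint : ∀ i ≤ m, 0 < p i ∧ p i < N := by
      intro i hi
      have := mem_cyl.mp hc i hi
      rw [← this]
      exact hG i hi
    refine ⟨hint, ?_⟩
    apply Set.inter_eq_right.mpr
    intro ω' hω'
    intro i hi
    rw [mem_cyl.mp hω' i hi]
    exact hint i hi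
  · left; exact Set.not_nonempty_iff_eq_empty.mp hne

/-- measure recursion preserved under intersecting with a level-m interior event -/
lemma G_cyl_succ_meas (hr : ∀ n, 1 ≤ n → r n ∈ Set.Ioo (0 : ℝ) 1)
    (hX : IsBirthDeathChain μ X r k) (p : ℕ → ℕ) (N m : ℕ) :
    μ (Gset X N m ∩ cyl X p (m + 1)) = Q r (p m) (p (m + 1)) * μ (Gset X N m ∩ cyl X p m) := by
  rcases G_inter_cyl (X := X) p N m with h | ⟨hint, h⟩
  · have h1 : μ (Gset X N m ∩ cyl X p (m + 1)) = 0 := by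
      refine measure_mono_null ?_ (by rw [h]; exact measure_empty : μ (Gset X N m ∩ cyl X p m) = 0)
      exact Set.inter_subset_inter_right _ (cyl_antitone p (Nat.le_succ m))
    rw [h1, h, measure_empty, mul_zero]
  · have hsub : cyl X p m ⊆ Gset X N m := Set.inter_eq_right.mp h
    have h2 : Gset X N m ∩ cyl X p (m + 1) = cyl X p (m + 1) :=
      Set.inter_eq_right.mpr fun ω hω => hsub (cyl_antitone p (Nat.le_succ m) hω)
    rw [h2, h, cyl_succ hr hX p m]

end Part3

section Part4
variable {μ : Measure Ω} {X : ℕ → Ω → ℕ} {r : ℕ → ℝ} {k : ℕ}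

lemma cyl_extend_meas (hr : ∀ n, 1 ≤ n → r n ∈ Set.Ioo (0 : ℝ) 1)
    (hX : IsBirthDeathChain μ X r k) (p : ℕ → ℕ) (m b : ℕ) :
    μ (cyl X p m ∩ {ω | X (m + 1) ω = b}) = Q r (p m) b * μ (cyl X p m) := by
  set p' : ℕ → ℕ := Function.update p (m + 1) b with hp'
  have h1 : cyl X p' m = cyl X p m :=
    cyl_congr fun i hi => Function.update_of_ne (by omega) _ _
  have h2 : p' m = p m := Function.update_of_ne (by omega) _ _
  have h3 : p' (m + 1) = b := Function.update_self _ _ _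
  have h := cyl_succ hr hX p' m
  rw [cyl_succ_split, h1, h2, h3] at h
  exact h

/-- the Lyapunov-type sum -/
noncomputable def ebar (μ : Measure Ω) (X : ℕ → Ω → ℕ) (t : ℕ → ℝ) (N m : ℕ) : ℝ≥0∞ :=
  ∑' p : Fin (m + 1) → ℕ, μ (Gset X N m ∩ cyl X (ofFin m p) m) * Phi t (ofFin m p m)

/-- event: interior until time m, hits N at time m+1 -/
def Fev (X : ℕ → Ω → ℕ) (N m : ℕ) : Set Ω := Gset X N m ∩ {ω | X (m + 1) ω = N}

lemma Fev_measurable (hm : ∀ i, Measurable (X i)) (N m : ℕ) : MeasurableSet (Fev X N m) :=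
  (Gset_measurable hm N m).inter (meas_level hm (m + 1) N)

lemma perp (hr : ∀ n, 1 ≤ n → r n ∈ Set.Ioo (0 : ℝ) 1)
    (hX : IsBirthDeathChain μ X r k) {t : ℕ → ℝ} (hpos : ∀ j, 0 < t j)
    (hrec : ∀ a, 1 ≤ a → r a * t a = (1 - r a) * t (a - 1))
    (N m : ℕ) (p : Fin (m + 1) → ℕ) :
    μ (Gset X N m ∩ cyl X (ofFin m p) m) * Phi t (ofFin m p m)
      = (∑' b : ℕ, μ (Gset X N (m + 1) ∩ cyl X (ofFin (m + 1) (Fin.snoc p b)) (m + 1))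
          * Phi t b)
        + μ (Fev X N m ∩ cyl X (ofFin m p) m) * Phi t N := by
  rcases G_inter_cyl (X := X) (ofFin m p) N m with h | ⟨hint, heq⟩
  · have hnull : μ (Gset X N m ∩ cyl X (ofFin m p) m) = 0 := by
      rw [h]; exact measure_empty
    have hz1 : ∀ b : ℕ,
        μ (Gset X N (m + 1) ∩ cyl X (ofFin (m + 1) (Fin.snoc p b)) (m + 1)) = 0 := by
      intro b
      refine measure_mono_null ?_ hnull
      rw [cyl_snoc, Gset_succ]
      rintro ω ⟨⟨hG, _⟩, ⟨hc, _⟩⟩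
      exact ⟨hG, hc⟩
    have hz2 : μ (Fev X N m ∩ cyl X (ofFin m p) m) = 0 := by
      refine measure_mono_null ?_ hnull
      rintro ω ⟨⟨hG, _⟩, hc⟩
      exact ⟨hG, hc⟩
    rw [h]
    simp [hz1, hz2]
  · have ha1 : 1 ≤ ofFin m p m := (hint m le_rfl).1
    have haN : ofFin m p m < N := (hint m le_rfl).2
    set a := ofFin m p m with hadef
    set c := μ (cyl X (ofFin m p) m) with hcdef
    have hsubG : cyl X (ofFin m p) m ⊆ Gset X N m := Set.inter_eq_right.mp heq
    have hterm : ∀ b : ℕ,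
        μ (Gset X N (m + 1) ∩ cyl X (ofFin (m + 1) (Fin.snoc p b)) (m + 1))
          = if 0 < b ∧ b < N then Q r a b * c else 0 := by
      intro b
      rw [cyl_snoc, Gset_succ]
      by_cases hb : 0 < b ∧ b < N
      · rw [if_pos hb]
        have hseteq : (Gset X N m ∩ {ω | 0 < X (m + 1) ω ∧ X (m + 1) ω < N})
            ∩ (cyl X (ofFin m p) m ∩ {ω | X (m + 1) ω = b})
            = cyl X (ofFin m p) m ∩ {ω | X (m + 1) ω = b} := by
          apply Set.inter_eq_right.mpr
          rintro ω ⟨hc1, hxb⟩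
          exact ⟨hsubG hc1, by rw [Set.mem_setOf_eq, hxb]; exact hb⟩
        rw [hseteq, cyl_extend_meas hr hX]
      · have : (Gset X N m ∩ {ω | 0 < X (m + 1) ω ∧ X (m + 1) ω < N})
            ∩ (cyl X (ofFin m p) m ∩ {ω | X (m + 1) ω = b}) = ∅ := by
          ext ω
          simp only [Set.mem_inter_iff, Set.mem_setOf_eq, Set.mem_empty_iff_false, iff_false]
          rintro ⟨⟨_, hx⟩, _, hxb⟩
          rw [hxb] at hx
          exact hb hx
        rw [this, if_neg hb, measure_empty]
    have hextra : μ (Fev X N m ∩ cyl X (ofFin m p) m) = Q r a N * c := by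
      have : Fev X N m ∩ cyl X (ofFin m p) m
          = cyl X (ofFin m p) m ∩ {ω | X (m + 1) ω = N} := by
        show (Gset X N m ∩ {ω | X (m + 1) ω = N}) ∩ cyl X (ofFin m p) m = _
        ext ω
        simp only [Set.mem_inter_iff, Set.mem_setOf_eq]
        constructor
        · rintro ⟨⟨_, h2⟩, h3⟩; exact ⟨h3, h2⟩
        · rintro ⟨h3, h2⟩; exact ⟨⟨hsubG h3, h2⟩, h3⟩
      rw [this, cyl_extend_meas hr hX]
    have htsum : (∑' b : ℕ,
        μ (Gset X N (m + 1) ∩ cyl X (ofFin (m + 1) (Fin.snoc p b)) (m + 1)) * Phi t b)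
        = (if 0 < a - 1 ∧ a - 1 < N then Q r a (a - 1) * c else 0) * Phi t (a - 1)
          + (if 0 < a + 1 ∧ a + 1 < N then Q r a (a + 1) * c else 0) * Phi t (a + 1) := by
      have hrw : ∀ b : ℕ,
          μ (Gset X N (m + 1) ∩ cyl X (ofFin (m + 1) (Fin.snoc p b)) (m + 1)) * Phi t b
            = (if 0 < b ∧ b < N then Q r a b * c else 0) * Phi t b := fun b => by
        rw [hterm b]
      rw [tsum_congr hrw]
      have hzero : ∀ b ∉ ({a - 1, a + 1} : Finset ℕ),
          (if 0 < b ∧ b < N then Q r a b * c else 0) * Phi t b = 0 := by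
        intro b hb
        simp only [Finset.mem_insert, Finset.mem_singleton, not_or] at hb
        split
        · rw [Q_other (a := a) (b := b) ha1 hb.2 hb.1, zero_mul, zero_mul]
        · rw [zero_mul]
      rw [tsum_eq_sum hzero, Finset.sum_pair (by omega : a - 1 ≠ a + 1)]
    rw [heq, htsum, hextra]
    -- now a pure computation
    have hQdown : (if 0 < a - 1 ∧ a - 1 < N then Q r a (a - 1) * c else 0) * Phi t (a - 1)
        = Q r a (a - 1) * c * Phi t (a - 1) := by
      by_cases h1 : 0 < a - 1
      · rw [if_pos ⟨h1, by omega⟩]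
      · have : a - 1 = 0 := by omega
        rw [this, Phi_zero, mul_zero, mul_zero]
    rw [hQdown]
    have hharm := Phi_harmonic (t := t) hr hpos hrec ha1
    by_cases hup : a + 1 < N
    · have hQN : Q r a N = 0 := Q_other (a := a) (b := N) ha1 (by omega) (by omega)
      rw [if_pos ⟨by omega, hup⟩, hQN, zero_mul, zero_mul, add_zero, hharm]
      ring
    · have hN : N = a + 1 := by omega
      rw [if_neg (by omega), zero_mul, add_zero, hN, hharm]
      ring

lemma ebar_step (hr : ∀ n, 1 ≤ n → r n ∈ Set.Ioo (0 : ℝ) 1)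
    (hX : IsBirthDeathChain μ X r k) {t : ℕ → ℝ} (hpos : ∀ j, 0 < t j)
    (hrec : ∀ a, 1 ≤ a → r a * t a = (1 - r a) * t (a - 1)) (N m : ℕ) :
    ebar μ X t N m = ebar μ X t N (m + 1) + Phi t N * μ (Fev X N m) := by
  have hre : ebar μ X t N (m + 1) = ∑' p : Fin (m + 1) → ℕ, ∑' b : ℕ,
      μ (Gset X N (m + 1) ∩ cyl X (ofFin (m + 1) (Fin.snoc p b)) (m + 1)) * Phi t b := by
    rw [ebar, ← Equiv.tsum_eq (pathEquiv m).symm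
      (fun p' => μ (Gset X N (m + 1) ∩ cyl X (ofFin (m + 1) p') (m + 1))
        * Phi t (ofFin (m + 1) p' (m + 1)))]
    rw [← ENNReal.tsum_prod
      (f := fun a b => μ (Gset X N (m + 1) ∩ cyl X (ofFin (m + 1) (Fin.snoc a b)) (m + 1))
        * Phi t b)]
    apply tsum_congr
    intro q
    have : (pathEquiv m).symm q = Fin.snoc q.1 q.2 := rfl
    rw [this, ofFin_snoc_last]
  rw [ebar, tsum_congr (perp hr hX hpos hrec N m), ENNReal.tsum_add, ← hre]
  congr 1
  rw [ENNReal.tsum_mul_right, ← master hX.meas (Fev_measurable hX.meas N m) m, mul_comm]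

lemma ebar_zero (hX : IsBirthDeathChain μ X r k) {t : ℕ → ℝ} {N : ℕ}
    (hk : 1 ≤ k) (hkN : k < N) :
    ebar μ X t N 0 = Phi t k := by
  rw [ebar]
  rw [tsum_eq_single (fun _ : Fin 1 => k) ?h]
  case h =>
    intro p hp
    have hp0 : p 0 ≠ k := by
      intro h
      apply hp
      funext i
      have : i = 0 := Subsingleton.elim i 0
      rw [this, h]
    have hof : ofFin 0 p 0 = p 0 := ofFin_eq 0 p le_rfl
    have hnull : μ (cyl X (ofFin 0 p) 0) = 0 := by
      rw [cyl_zero, start_meas hX, if_neg (by rw [hof]; exact hp0)]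
    have : μ (Gset X N 0 ∩ cyl X (ofFin 0 p) 0) = 0 :=
      measure_mono_null Set.inter_subset_right hnull
    rw [this, zero_mul]
  · have hof : ∀ i, ofFin 0 (fun _ : Fin 1 => k) i = k := fun i => rfl
    have h1 : Gset X N 0 ∩ cyl X (ofFin 0 (fun _ : Fin 1 => k)) 0
        = {ω | X 0 ω = k} := by
      rw [cyl_zero, hof 0]
      apply Set.inter_eq_right.mpr
      intro ω hω
      intro i hi
      have : i = 0 := by omega
      rw [this, Set.mem_setOf_eq.mp hω]
      exact ⟨hk, hkN⟩
    rw [h1, hof 0, start_meas hX, if_pos rfl, one_mul]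

end Part4

section Part5
variable {μ : Measure Ω} {X : ℕ → Ω → ℕ} {r : ℕ → ℝ} {k : ℕ}

lemma ebar_conserve (hr : ∀ n, 1 ≤ n → r n ∈ Set.Ioo (0 : ℝ) 1)
    (hX : IsBirthDeathChain μ X r k) {t : ℕ → ℝ} (hpos : ∀ j, 0 < t j)
    (hrec : ∀ a, 1 ≤ a → r a * t a = (1 - r a) * t (a - 1))
    {N : ℕ} (hk : 1 ≤ k) (hkN : k < N) (M : ℕ) :
    Phi t k = ebar μ X t N M + Phi t N * ∑ m ∈ Finset.range M, μ (Fev X N m) := by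
  induction M with
  | zero => rw [ebar_zero hX hk hkN]; simp
  | succ M ih =>
      rw [Finset.sum_range_succ, mul_add, ih, ebar_step hr hX hpos hrec N M]
      ring

lemma ebar_le (hX : IsBirthDeathChain μ X r k) {t : ℕ → ℝ} (hpos : ∀ j, 0 < t j)
    (N m : ℕ) :
    ebar μ X t N m ≤ Phi t N * μ (Gset X N m) := by
  rw [master hX.meas (Gset_measurable hX.meas N m) m, ← ENNReal.tsum_mul_left]
  apply ENNReal.tsum_le_tsum
  intro p
  rcases G_inter_cyl (X := X) (ofFin m p) N m with h | ⟨hint, heq⟩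
  · rw [h, measure_empty, zero_mul, mul_zero]
  · rw [mul_comm (Phi t N)]
    exact mul_le_mul_right (Phi_mono hpos (hint m le_rfl).2.le) _

def realc (r : ℕ → ℝ) (a : ℕ) : ℝ := ∏ i ∈ Finset.Icc 1 a, (1 - r i)

lemma realc_pos (hr : ∀ n, 1 ≤ n → r n ∈ Set.Ioo (0 : ℝ) 1) (a : ℕ) : 0 < realc r a :=
  Finset.prod_pos fun i hi => by
    have := hr i (Finset.mem_Icc.mp hi).1
    linarith [this.2]

lemma realc_le_one (hr : ∀ n, 1 ≤ n → r n ∈ Set.Ioo (0 : ℝ) 1) (a : ℕ) : realc r a ≤ 1 :=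
  Finset.prod_le_one
    (fun i hi => by have := hr i (Finset.mem_Icc.mp hi).1; linarith [this.2])
    (fun i hi => by have := hr i (Finset.mem_Icc.mp hi).1; linarith [this.1])

lemma realc_anti (hr : ∀ n, 1 ≤ n → r n ∈ Set.Ioo (0 : ℝ) 1) :
    ∀ {a b : ℕ}, a ≤ b → realc r b ≤ realc r a := by
  intro a b hab
  induction b with
  | zero => have h0 : a = 0 := by omega
            rw [h0]
  | succ b ih =>
      rcases Nat.lt_succ_iff_lt_or_eq.mp (Nat.lt_succ_of_le hab) with h | h
      · have h1 : realc r (b + 1) = realc r b * (1 - r (b + 1)) := by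
          rw [realc, realc, Finset.prod_Icc_succ_top (by omega)]
        have h2 := hr (b + 1) (by omega)
        have h3 : realc r (b + 1) ≤ realc r b := by
          rw [h1]
          nlinarith [realc_pos hr b, h2.1, h2.2]
        exact h3.trans (ih (by omega))
      · rw [h]

lemma realc_eq_range (r : ℕ → ℝ) (a : ℕ) :
    realc r a = ∏ j ∈ Finset.range a, (1 - r (a - j)) := by
  have h1 : realc r a = ∏ j ∈ Finset.range a, (1 - r (j + 1)) := by
    induction a with
    | zero => rfl
    | succ a ih =>
        rw [realc, Finset.prod_Icc_succ_top (by omega), ← realc, ih,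
          Finset.prod_range_succ]
  have h2 : ∏ j ∈ Finset.range a, (1 - r (a - j))
      = ∏ j ∈ Finset.range a, (1 - r (a - 1 - j + 1)) := by
    apply Finset.prod_congr rfl
    intro j hj
    have hj' : j < a := Finset.mem_range.mp hj
    congr 2
    omega
  rw [h1, h2, Finset.prod_range_reflect (fun j => (1 - r (j + 1))) a]

lemma cyl_down (hr : ∀ n, 1 ≤ n → r n ∈ Set.Ioo (0 : ℝ) 1)
    (hX : IsBirthDeathChain μ X r k) (p : ℕ → ℕ) (m a : ℕ) (ha : 1 ≤ a)
    (hpa : ∀ j ≤ a, p (m + j) = a - j) :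
    μ (cyl X p (m + a)) = ENNReal.ofReal (realc r a) * μ (cyl X p m) := by
  have key : ∀ s, s ≤ a →
      μ (cyl X p (m + s)) = ENNReal.ofReal (∏ j ∈ Finset.range s, (1 - r (a - j)))
        * μ (cyl X p m) := by
    intro s
    induction s with
    | zero => intro _; simp
    | succ s ih =>
        intro hs
        have hs' : s ≤ a := by omega
        have h1 : m + s + 1 = m + (s + 1) := by omega
        have h2 : p (m + s) = a - s := hpa s hs'
        have h3 : p (m + (s + 1)) = a - (s + 1) := hpa (s + 1) hs
        have h4 := cyl_succ hr hX p (m + s)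
        rw [h1, h2, h3] at h4
        have h7 : a - (s + 1) = (a - s) - 1 := by omega
        rw [h7] at h4
        have h6 : 1 ≤ a - s := by omega
        have h8 : (0:ℝ) ≤ 1 - r (a - s) := by
          have := hr (a - s) h6
          linarith [this.2]
        rw [Q_down h6] at h4
        rw [h4, ih hs', Finset.prod_range_succ, ← mul_assoc,
          ← ENNReal.ofReal_mul h8]
        congr 2
        rw [mul_comm]
  rw [key a le_rfl, ← realc_eq_range]

lemma Gdecay (hr : ∀ n, 1 ≤ n → r n ∈ Set.Ioo (0 : ℝ) 1)
    (hX : IsBirthDeathChain μ X r k) (N : ℕ) (hN : 1 ≤ N) (m : ℕ) :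
    μ (Gset X N (m + N)) ≤ (1 - ENNReal.ofReal (realc r (N - 1))) * μ (Gset X N m) := by
  have := hX.isProb
  rw [master hX.meas (Gset_measurable hX.meas N (m + N)) m,
    master hX.meas (Gset_measurable hX.meas N m) m, ← ENNReal.tsum_mul_left]
  apply ENNReal.tsum_le_tsum
  intro p
  rcases G_inter_cyl (X := X) (ofFin m p) N m with h | ⟨hint, heq⟩
  · have hsub : Gset X N (m + N) ∩ cyl X (ofFin m p) m
        ⊆ Gset X N m ∩ cyl X (ofFin m p) m :=
      Set.inter_subset_inter_left _ (Gset_antitone (Nat.le_add_right m N))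
    have h0 : μ (Gset X N (m + N) ∩ cyl X (ofFin m p) m) = 0 :=
      measure_mono_null hsub (by rw [h]; exact measure_empty)
    rw [h0, h, measure_empty, mul_zero]
  · set a := ofFin m p m with hadef
    have ha1 : 1 ≤ a := (hint m le_rfl).1
    have haN : a < N := (hint m le_rfl).2
    set pd : ℕ → ℕ := fun i => if i ≤ m then ofFin m p i else a - (i - m) with hpddef
    have hpa : ∀ j ≤ a, pd (m + j) = a - j := by
      intro j hj
      by_cases hj0 : j = 0
      · subst hj0
        simp only [hpddef, add_zero, if_pos le_rfl, Nat.sub_zero, hadef]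
      · have hmj : ¬ (m + j ≤ m) := by omega
        simp only [hpddef, if_neg hmj]
        congr 1
        omega
    have hcylpd : cyl X pd m = cyl X (ofFin m p) m :=
      cyl_congr fun i hi => by simp only [hpddef, if_pos hi]
    have hdown := cyl_down hr hX pd m a ha1 hpa
    rw [hcylpd] at hdown
    have hDsub : cyl X pd (m + a) ⊆ cyl X (ofFin m p) m := by
      rw [← hcylpd]
      exact cyl_antitone pd (Nat.le_add_right m a)
    have hdisj : Gset X N (m + N) ∩ cyl X pd (m + a) = ∅ := by
      ext ω
      simp only [Set.mem_inter_iff, Set.mem_empty_iff_false, iff_false, not_and]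
      intro hG hc
      have h1 : X (m + a) ω = pd (m + a) := mem_cyl.mp hc (m + a) le_rfl
      have h2 : pd (m + a) = 0 := by
        rw [hpa a le_rfl]
        omega
      have h3 := (hG (m + a) (by omega)).1
      omega
    have hsub2 : Gset X N (m + N) ∩ cyl X (ofFin m p) m
        ⊆ cyl X (ofFin m p) m \ cyl X pd (m + a) := by
      rintro ω ⟨hG, hc⟩
      refine ⟨hc, fun hD => ?_⟩
      have : ω ∈ Gset X N (m + N) ∩ cyl X pd (m + a) := ⟨hG, hD⟩
      rw [hdisj] at this
      exact this
    have hDmeas : MeasurableSet (cyl X pd (m + a)) := cyl_measurable hX.meas pd (m + a)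
    have hdiff : μ (cyl X (ofFin m p) m \ cyl X pd (m + a))
        = μ (cyl X (ofFin m p) m) - ENNReal.ofReal (realc r a) * μ (cyl X (ofFin m p) m) := by
      rw [measure_diff hDsub hDmeas.nullMeasurableSet (measure_ne_top μ _), hdown]
    calc μ (Gset X N (m + N) ∩ cyl X (ofFin m p) m)
        ≤ μ (cyl X (ofFin m p) m \ cyl X pd (m + a)) := measure_mono hsub2
      _ = μ (cyl X (ofFin m p) m) - ENNReal.ofReal (realc r a) * μ (cyl X (ofFin m p) m) :=
          hdiff
      _ ≤ μ (cyl X (ofFin m p) m)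
          - ENNReal.ofReal (realc r (N - 1)) * μ (cyl X (ofFin m p) m) := by
          apply tsub_le_tsub_left
          exact mul_le_mul_left (ENNReal.ofReal_le_ofReal (realc_anti hr (by omega))) _
      _ = (1 - ENNReal.ofReal (realc r (N - 1))) * μ (cyl X (ofFin m p) m) := by
          rw [ENNReal.sub_mul (fun _ _ => measure_ne_top μ _), one_mul]
      _ = (1 - ENNReal.ofReal (realc r (N - 1))) * μ (Gset X N m ∩ cyl X (ofFin m p) m) := by
          rw [heq]

lemma Gtendsto (hr : ∀ n, 1 ≤ n → r n ∈ Set.Ioo (0 : ℝ) 1)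
    (hX : IsBirthDeathChain μ X r k) (N : ℕ) (hN : 1 ≤ N) :
    Tendsto (fun m => μ (Gset X N m)) atTop (𝓝 0) := by
  have := hX.isProb
  set qq : ℝ≥0∞ := 1 - ENNReal.ofReal (realc r (N - 1)) with hqq
  have hql : qq < 1 :=
    ENNReal.sub_lt_self ENNReal.one_ne_top one_ne_zero
      (ne_of_gt (ENNReal.ofReal_pos.mpr (realc_pos hr (N - 1))))
  have hdec : ∀ m, μ (Gset X N (m + N)) ≤ qq * μ (Gset X N m) := Gdecay hr hX N hN
  have hpow : ∀ s, μ (Gset X N (s * N)) ≤ qq ^ s := by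
    intro s
    induction s with
    | zero => simpa using prob_le_one
    | succ s ih =>
        have h1 : (s + 1) * N = s * N + N := by ring
        rw [h1, pow_succ]
        calc μ (Gset X N (s * N + N)) ≤ qq * μ (Gset X N (s * N)) := hdec (s * N)
          _ ≤ qq * qq ^ s := mul_le_mul_right ih _
          _ = qq ^ s * qq := mul_comm _ _
  rw [ENNReal.tendsto_atTop_zero]
  intro ε hε
  have h2 := ENNReal.tendsto_pow_atTop_nhds_zero_of_lt_one hql
  rw [ENNReal.tendsto_atTop_zero] at h2
  obtain ⟨s0, hs0⟩ := h2 ε hε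
  refine ⟨s0 * N, fun m hm => ?_⟩
  calc μ (Gset X N m) ≤ μ (Gset X N (s0 * N)) := measure_mono (Gset_antitone hm)
    _ ≤ qq ^ s0 := hpow s0
    _ ≤ ε := hs0 s0 le_rfl

lemma Fev_pairwise_disjoint (X : ℕ → Ω → ℕ) (N : ℕ) (hN : 1 ≤ N) :
    Pairwise (Function.onFun Disjoint (Fev X N)) := by
  intro m m' hne
  wlog h : m < m' generalizing m m'
  · exact (this hne.symm (by omega)).symm
  refine Set.disjoint_left.mpr ?_
  rintro ω ⟨hG, hx⟩ ⟨hG', hx'⟩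
  have h1 : X (m + 1) ω < N := (hG' (m + 1) (by omega)).2
  rw [Set.mem_setOf_eq.mp hx] at h1
  omega

lemma hitN_measure (hr : ∀ n, 1 ≤ n → r n ∈ Set.Ioo (0 : ℝ) 1)
    (hX : IsBirthDeathChain μ X r k) {t : ℕ → ℝ} (hpos : ∀ j, 0 < t j)
    (hrec : ∀ a, 1 ≤ a → r a * t a = (1 - r a) * t (a - 1))
    {N : ℕ} (hk : 1 ≤ k) (hkN : k < N) :
    μ (⋃ m, Fev X N m) = ENNReal.ofReal (phi t k / phi t N) := by
  have := hX.isProb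
  have hN1 : 1 ≤ N := by omega
  have hBN : μ (⋃ m, Fev X N m) = ∑' m, μ (Fev X N m) :=
    measure_iUnion (Fev_pairwise_disjoint X N hN1) (fun m => Fev_measurable hX.meas N m)
  -- limit of the conservation identity
  have hphiNpos : 0 < phi t N :=
    Finset.sum_pos (fun j _ => hpos j) (by simp [Finset.nonempty_range_iff]; omega)
  have hPhiN0 : Phi t N ≠ 0 := by
    simp only [Phi]
    exact ne_of_gt (ENNReal.ofReal_pos.mpr hphiNpos)
  have htend1 : Tendsto (fun M => ebar μ X t N M) atTop (𝓝 0) := by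
    have hb : ∀ M, ebar μ X t N M ≤ Phi t N * μ (Gset X N M) := ebar_le hX hpos N
    have ht2 : Tendsto (fun M => Phi t N * μ (Gset X N M)) atTop (𝓝 0) := by
      have := ENNReal.Tendsto.const_mul (Gtendsto hr hX N hN1) (Or.inr (Phi_ne_top (t := t) N))
      simpa using this
    exact tendsto_of_tendsto_of_tendsto_of_le_of_le tendsto_const_nhds ht2
      (fun M => zero_le) hb
  have htend2 : Tendsto (fun M => Phi t N * ∑ m ∈ Finset.range M, μ (Fev X N m)) atTop
      (𝓝 (Phi t N * μ (⋃ m, Fev X N m))) := by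
    rw [hBN]
    exact ENNReal.Tendsto.const_mul (ENNReal.tendsto_nat_tsum _) (Or.inr (Phi_ne_top (t := t) N))
  have htend : Tendsto (fun M => ebar μ X t N M
      + Phi t N * ∑ m ∈ Finset.range M, μ (Fev X N m)) atTop
      (𝓝 (0 + Phi t N * μ (⋃ m, Fev X N m))) := htend1.add htend2
  have hconst : (fun M => ebar μ X t N M + Phi t N * ∑ m ∈ Finset.range M, μ (Fev X N m))
      = fun _ => Phi t k := funext fun M => (ebar_conserve hr hX hpos hrec hk hkN M).symm
  rw [hconst] at htend
  have hkey : Phi t k = Phi t N * μ (⋃ m, Fev X N m) := by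
    have := tendsto_nhds_unique htend tendsto_const_nhds
    rw [zero_add] at this
    exact this.symm
  have := (ENNReal.eq_div_iff hPhiN0 (Phi_ne_top (t := t) N)).mpr hkey.symm
  rw [this, Phi, Phi, ENNReal.ofReal_div_of_pos hphiNpos]

end Part5

section Part6a
variable {μ : Measure Ω} {X : ℕ → Ω → ℕ} {r : ℕ → ℝ} {k : ℕ}

/-- generic: events determined by the path up to time m are measurable -/
lemma meas_of_level (hm : ∀ i, Measurable (X i)) (m : ℕ) (Pr : (ℕ → ℕ) → Prop)
    (hPr : ∀ p p' : ℕ → ℕ, (∀ i ≤ m, p i = p' i) → Pr p → Pr p') :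
    MeasurableSet {ω | Pr (fun i => X i ω)} := by
  have heq : {ω | Pr (fun i => X i ω)}
      = ⋃ (p : Fin (m + 1) → ℕ) (_ : Pr (ofFin m p)), cyl X (ofFin m p) m := by
    ext ω
    simp only [Set.mem_setOf_eq, Set.mem_iUnion]
    constructor
    · intro h
      refine ⟨fun i => X i ω, ?_, ?_⟩
      · exact hPr _ _ (fun i hi => by rw [ofFin_eq m _ hi]) h
      · rw [mem_cyl]; intro i hi; rw [ofFin_eq m _ hi]
    · rintro ⟨p, hp, hc⟩
      exact hPr _ _ (fun i hi => (mem_cyl.mp hc i hi).symm) hp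
  rw [heq]
  exact MeasurableSet.iUnion fun p => MeasurableSet.iUnion fun _ => cyl_measurable hm _ m

/-- generic dichotomy for level-determined events -/
lemma level_inter_cyl (m : ℕ) (Pr : (ℕ → ℕ) → Prop)
    (hPr : ∀ p p' : ℕ → ℕ, (∀ i ≤ m, p i = p' i) → Pr p → Pr p') (p : ℕ → ℕ) :
    {ω | Pr (fun i => X i ω)} ∩ cyl X p m = ∅ ∨
      {ω | Pr (fun i => X i ω)} ∩ cyl X p m = cyl X p m := by
  by_cases hne : ({ω | Pr (fun i => X i ω)} ∩ cyl X p m).Nonempty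
  · right
    obtain ⟨ω, hP, hc⟩ := hne
    apply Set.inter_eq_right.mpr
    intro ω' hc'
    have h1 : ∀ i ≤ m, X i ω = X i ω' := fun i hi =>
      (mem_cyl.mp hc i hi).trans (mem_cyl.mp hc' i hi).symm
    exact hPr _ _ h1 hP
  · left; exact Set.not_nonempty_iff_eq_empty.mp hne

/-- the set of sample paths following the chain rules -/
def Good (X : ℕ → Ω → ℕ) (k : ℕ) : Set Ω :=
  {ω | X 0 ω = k ∧ ∀ m, (X m ω = 0 → X (m + 1) ω = 0) ∧
    (0 < X m ω → X (m + 1) ω = X m ω + 1 ∨ X (m + 1) ω = X m ω - 1)}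

def LegalStep (X : ℕ → Ω → ℕ) (m : ℕ) : Set Ω :=
  {ω | (X m ω = 0 → X (m + 1) ω = 0) ∧
    (0 < X m ω → X (m + 1) ω = X m ω + 1 ∨ X (m + 1) ω = X m ω - 1)}

lemma LegalStep_measurable (hm : ∀ i, Measurable (X i)) (m : ℕ) :
    MeasurableSet (LegalStep X m) :=
  meas_of_level hm (m + 1)
    (fun p => (p m = 0 → p (m + 1) = 0) ∧
      (0 < p m → p (m + 1) = p m + 1 ∨ p (m + 1) = p m - 1))
    (fun p p' h hp => by
      rw [← h m (by omega), ← h (m + 1) le_rfl]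
      exact hp)

lemma Good_eq : Good X k = {ω | X 0 ω = k} ∩ ⋂ m, LegalStep X m := by
  ext ω
  simp only [Good, LegalStep, Set.mem_inter_iff, Set.mem_setOf_eq, Set.mem_iInter]

lemma Good_measurable (hm : ∀ i, Measurable (X i)) : MeasurableSet (Good X k) := by
  rw [Good_eq]
  exact (meas_level hm 0 k).inter (MeasurableSet.iInter fun m => LegalStep_measurable hm m)

lemma LegalStep_null (hr : ∀ n, 1 ≤ n → r n ∈ Set.Ioo (0 : ℝ) 1)
    (hX : IsBirthDeathChain μ X r k) (m : ℕ) :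
    μ (LegalStep X m)ᶜ = 0 := by
  have hms : MeasurableSet (LegalStep X m)ᶜ :=
    (LegalStep_measurable hX.meas m).compl
  rw [master hX.meas hms (m + 1)]
  have hterm : ∀ p : Fin (m + 2) → ℕ,
      μ ((LegalStep X m)ᶜ ∩ cyl X (ofFin (m + 1) p) (m + 1)) = 0 := by
    intro p
    set P := ofFin (m + 1) p with hP
    by_cases hlegal : (P m = 0 → P (m + 1) = 0) ∧
        (0 < P m → P (m + 1) = P m + 1 ∨ P (m + 1) = P m - 1)
    · -- legal transition: the intersection is empty
      have : (LegalStep X m)ᶜ ∩ cyl X P (m + 1) = ∅ := by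
        apply Set.eq_empty_iff_forall_notMem.mpr
        rintro ω ⟨hbad, hc⟩
        apply hbad
        have e1 : X m ω = P m := mem_cyl.mp hc m (by omega)
        have e2 : X (m + 1) ω = P (m + 1) := mem_cyl.mp hc (m + 1) le_rfl
        show (X m ω = 0 → X (m + 1) ω = 0) ∧ _
        rw [e1, e2]
        exact hlegal
      rw [this, measure_empty]
    · -- illegal transition: the cylinder is null
      have hQ : Q r (P m) (P (m + 1)) = 0 := by
        rcases Nat.eq_zero_or_pos (P m) with h0 | h0
        · have hne : P (m + 1) ≠ 0 := by
            intro h0'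
            exact hlegal ⟨fun _ => h0', fun hpos => absurd hpos (by omega)⟩
          unfold Q q
          rw [if_pos h0, if_neg hne, ENNReal.ofReal_zero]
        · have hA : P m = 0 → P (m + 1) = 0 := fun h => absurd h (by omega)
          have hB : ¬ (P (m + 1) = P m + 1 ∨ P (m + 1) = P m - 1) := by
            intro hor
            exact hlegal ⟨hA, fun _ => hor⟩
          exact Q_other h0 (fun h => hB (Or.inl h)) (fun h => hB (Or.inr h))
      have : μ (cyl X P (m + 1)) = 0 := by
        rw [cyl_succ hr hX P m, hQ, zero_mul]
      exact measure_mono_null Set.inter_subset_right this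
  rw [tsum_congr hterm]
  simp

lemma Good_null (hr : ∀ n, 1 ≤ n → r n ∈ Set.Ioo (0 : ℝ) 1)
    (hX : IsBirthDeathChain μ X r k) :
    μ (Good X k)ᶜ = 0 := by
  rw [Good_eq, Set.compl_inter, Set.compl_iInter]
  apply measure_union_null
  · exact hX.start
  · exact measure_iUnion_null fun m => LegalStep_null hr hX m

end Part6a

section Part6b
variable {μ : Measure Ω} {X : ℕ → Ω → ℕ} {r : ℕ → ℝ} {k : ℕ}

def visCount (X : ℕ → Ω → ℕ) (n : ℕ) (ω : Ω) (i : ℕ) : ℕ :=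
  ((Finset.range (i + 1)).filter (fun j => X j ω = n)).card

def Evt (X : ℕ → Ω → ℕ) (n s m : ℕ) : Set Ω :=
  {ω | visCount X n ω m = s ∧ X m ω = n ∧ ∀ j ≤ m, X j ω ≠ 0}

def Aft (X : ℕ → Ω → ℕ) (n m : ℕ) : Set Ω :=
  {ω | ∃ i, m < i ∧ X i ω = n ∧ ∀ j, m < j → j ≤ i → X j ω ≠ 0}

def Rv (X : ℕ → Ω → ℕ) (n s : ℕ) : Set Ω := ⋃ m, Evt X n s m

def Vset (X : ℕ → Ω → ℕ) (n : ℕ) : Set Ω :=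
  {ω | (∀ j, X j ω ≠ 0) ∧ ∀ M, ∃ i, M ≤ i ∧ X i ω = n}

lemma visCount_congr {n m : ℕ} {ω ω' : Ω} (h : ∀ j ≤ m, X j ω = X j ω') :
    visCount X n ω m = visCount X n ω' m := by
  unfold visCount
  congr 1
  apply Finset.filter_congr
  intro j hj
  rw [h j (Nat.lt_succ_iff.mp (Finset.mem_range.mp hj))]

lemma Evt_measurable (hm : ∀ i, Measurable (X i)) (n s m : ℕ) :
    MeasurableSet (Evt X n s m) := by
  have : Evt X n s m = {ω | (fun p : ℕ → ℕ =>
      ((Finset.range (m + 1)).filter (fun j => p j = n)).card = s ∧ p m = n ∧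
        ∀ j ≤ m, p j ≠ 0) (fun i => X i ω)} := rfl
  rw [this]
  refine meas_of_level hm m (Pr := fun p =>
    (Finset.filter (fun j => p j = n) (Finset.range (m + 1))).card = s ∧ p m = n ∧
      ∀ j ≤ m, p j ≠ 0) (fun p p' h hp => ?_)
  refine ⟨?_, by rw [← h m le_rfl]; exact hp.2.1, fun j hj => by
    rw [← h j hj]; exact hp.2.2 j hj⟩
  rw [← hp.1]
  congr 1
  apply Finset.filter_congr
  intro j hj
  rw [h j (Nat.lt_succ_iff.mp (Finset.mem_range.mp hj))]

lemma Aft_measurable (hm : ∀ i, Measurable (X i)) (n m : ℕ) :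
    MeasurableSet (Aft X n m) := by
  have : Aft X n m = ⋃ i, {ω | (fun p : ℕ → ℕ =>
      m < i ∧ p i = n ∧ ∀ j, m < j → j ≤ i → p j ≠ 0) (fun j => X j ω)} := by
    ext ω
    simp only [Aft, Set.mem_setOf_eq, Set.mem_iUnion]
  rw [this]
  refine MeasurableSet.iUnion fun i => meas_of_level hm i (Pr := fun p =>
    m < i ∧ p i = n ∧ ∀ j, m < j → j ≤ i → p j ≠ 0) (fun p p' h hp => ?_)
  exact ⟨hp.1, by rw [← h i le_rfl]; exact hp.2.1,
    fun j hj1 hj2 => by rw [← h j hj2]; exact hp.2.2 j hj1 hj2⟩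

lemma Rv_measurable (hm : ∀ i, Measurable (X i)) (n s : ℕ) :
    MeasurableSet (Rv X n s) :=
  MeasurableSet.iUnion fun m => Evt_measurable hm n s m

lemma Evt_pairwise_disjoint (n s : ℕ) :
    Pairwise (Function.onFun Disjoint (Evt X n s)) := by
  intro m m' hne
  wlog h : m < m' generalizing m m'
  · exact (this hne.symm (by omega)).symm
  refine Set.disjoint_left.mpr ?_
  rintro ω ⟨hv, hx, _⟩ ⟨hv', hx', _⟩
  have hsub : insert m' ((Finset.range (m + 1)).filter (fun j => X j ω = n))
      ⊆ (Finset.range (m' + 1)).filter (fun j => X j ω = n) := by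
    intro j hj
    rcases Finset.mem_insert.mp hj with hj | hj
    · subst hj
      exact Finset.mem_filter.mpr ⟨Finset.mem_range.mpr (by omega), hx'⟩
    · have := Finset.mem_filter.mp hj
      exact Finset.mem_filter.mpr ⟨Finset.mem_range.mpr (by
        have := Finset.mem_range.mp this.1; omega), this.2⟩
  have hnotmem : m' ∉ (Finset.range (m + 1)).filter (fun j => X j ω = n) := by
    intro hmem
    have := Finset.mem_range.mp (Finset.mem_filter.mp hmem).1
    omega
  have hcard := Finset.card_le_card hsub
  rw [Finset.card_insert_of_notMem hnotmem] at hcard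
  unfold visCount at hv hv'
  omega

lemma Rv_succ_subset (n s : ℕ) (hs : 1 ≤ s) :
    Rv X n (s + 1) ⊆ ⋃ m, (Evt X n s m ∩ Aft X n m) := by
  intro ω hω
  obtain ⟨i, hvi, hxi, hz⟩ : ∃ i, visCount X n ω i = s + 1 ∧ X i ω = n ∧
      ∀ j ≤ i, X j ω ≠ 0 := by
    rcases Set.mem_iUnion.mp hω with ⟨m, hm⟩
    exact ⟨m, hm.1, hm.2.1, hm.2.2⟩
  set F := ((Finset.range (i + 1)).filter (fun j => X j ω = n)).erase i with hF
  have himem : i ∈ (Finset.range (i + 1)).filter (fun j => X j ω = n) :=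
    Finset.mem_filter.mpr ⟨Finset.mem_range.mpr (by omega), hxi⟩
  have hcardF : F.card = s := by
    rw [hF, Finset.card_erase_of_mem himem]
    unfold visCount at hvi
    omega
  have hFne : F.Nonempty := Finset.card_pos.mp (by omega)
  set m := F.max' hFne with hm
  have hmF : m ∈ F := Finset.max'_mem F hFne
  have hml : ∀ j ∈ F, j ≤ m := fun j hj => Finset.le_max' F j hj
  have hmi : m < i := by
    have h1 := Finset.mem_erase.mp hmF
    have h2 := Finset.mem_range.mp (Finset.mem_filter.mp h1.2).1
    omega
  have hxm : X m ω = n := (Finset.mem_filter.mp (Finset.mem_erase.mp hmF).2).2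
  have hfilter_eq : (Finset.range (m + 1)).filter (fun j => X j ω = n) = F := by
    apply Finset.Subset.antisymm
    · intro j hj
      have h1 := Finset.mem_filter.mp hj
      have h2 := Finset.mem_range.mp h1.1
      refine Finset.mem_erase.mpr ⟨by omega, Finset.mem_filter.mpr
        ⟨Finset.mem_range.mpr (by omega), h1.2⟩⟩
    · intro j hj
      have h1 := Finset.mem_erase.mp hj
      have h2 := Finset.mem_filter.mp h1.2
      exact Finset.mem_filter.mpr ⟨Finset.mem_range.mpr (by
        have := hml j hj; omega), h2.2⟩
  refine Set.mem_iUnion.mpr ⟨m, ⟨?_, hxm, fun j hj => hz j (by omega)⟩,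
    ⟨i, hmi, hxi, fun j _ hj2 => hz j hj2⟩⟩
  unfold visCount
  rw [hfilter_eq]
  exact hcardF

lemma Evt_Aft_bound (hr : ∀ n, 1 ≤ n → r n ∈ Set.Ioo (0 : ℝ) 1)
    (hX : IsBirthDeathChain μ X r k) (n : ℕ) (hn : 1 ≤ n) (s m : ℕ) :
    μ (Evt X n s m ∩ Aft X n m)
      ≤ (1 - ENNReal.ofReal (realc r n)) * μ (Evt X n s m) := by
  have := hX.isProb
  rw [master hX.meas ((Evt_measurable hX.meas n s m).inter
      (Aft_measurable hX.meas n m)) m,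
    master hX.meas (Evt_measurable hX.meas n s m) m, ← ENNReal.tsum_mul_left]
  apply ENNReal.tsum_le_tsum
  intro p
  set P := ofFin m p with hPdef
  -- dichotomy on Evt ∩ cyl
  by_cases hne : (Evt X n s m ∩ cyl X P m).Nonempty
  · obtain ⟨ω0, hE0, hc0⟩ := hne
    have hcylE : cyl X P m ⊆ Evt X n s m := by
      intro ω' hc'
      have hagree : ∀ j ≤ m, X j ω0 = X j ω' := fun j hj =>
        (mem_cyl.mp hc0 j hj).trans (mem_cyl.mp hc' j hj).symm
      obtain ⟨hv0, hx0, hz0⟩ := hE0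
      refine ⟨?_, ?_, ?_⟩
      · rw [← visCount_congr hagree]; exact hv0
      · rw [← hagree m le_rfl]; exact hx0
      · intro j hj; rw [← hagree j hj]; exact hz0 j hj
    have hEeq : Evt X n s m ∩ cyl X P m = cyl X P m := Set.inter_eq_right.mpr hcylE
    have hPm : P m = n := by
      rw [← mem_cyl.mp hc0 m le_rfl]; exact hE0.2.1
    -- down extension
    set pd : ℕ → ℕ := fun i => if i ≤ m then P i else n - (i - m) with hpddef
    have hpa : ∀ j ≤ n, pd (m + j) = n - j := by
      intro j hj
      by_cases hj0 : j = 0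
      · subst hj0
        simp only [hpddef, add_zero, if_pos le_rfl, Nat.sub_zero, hPm]
      · have hmj : ¬ (m + j ≤ m) := by omega
        simp only [hpddef, if_neg hmj]
        congr 1
        omega
    have hcylpd : cyl X pd m = cyl X P m :=
      cyl_congr fun i hi => by simp only [hpddef, if_pos hi]
    have hdown := cyl_down hr hX pd m n hn hpa
    rw [hcylpd] at hdown
    have hDsub : cyl X pd (m + n) ⊆ cyl X P m := by
      rw [← hcylpd]
      exact cyl_antitone pd (Nat.le_add_right m n)
    have hdisj : Aft X n m ∩ cyl X pd (m + n) = ∅ := by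
      apply Set.eq_empty_iff_forall_notMem.mpr
      rintro ω ⟨⟨i, hmi, hxi, hzi⟩, hD⟩
      have hXat : ∀ j ≤ n, X (m + j) ω = n - j := by
        intro j hj
        rw [mem_cyl.mp hD (m + j) (by omega)]
        exact hpa j hj
      by_cases hin : i ≤ m + n
      · have h1 := hXat (i - m) (by omega)
        rw [show m + (i - m) = i by omega] at h1
        rw [hxi] at h1
        omega
      · have h1 := hXat n le_rfl
        have := hzi (m + n) (by omega) (by omega)
        omega
    have hsub2 : (Evt X n s m ∩ Aft X n m) ∩ cyl X P m
        ⊆ cyl X P m \ cyl X pd (m + n) := by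
      rintro ω ⟨⟨_, hA⟩, hc⟩
      refine ⟨hc, fun hD => ?_⟩
      have : ω ∈ Aft X n m ∩ cyl X pd (m + n) := ⟨hA, hD⟩
      rw [hdisj] at this
      exact this
    have hDmeas : MeasurableSet (cyl X pd (m + n)) := cyl_measurable hX.meas pd (m + n)
    calc μ ((Evt X n s m ∩ Aft X n m) ∩ cyl X P m)
        ≤ μ (cyl X P m \ cyl X pd (m + n)) := measure_mono hsub2
      _ = μ (cyl X P m) - ENNReal.ofReal (realc r n) * μ (cyl X P m) := by
          rw [measure_diff hDsub hDmeas.nullMeasurableSet (measure_ne_top μ _), hdown]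
      _ = (1 - ENNReal.ofReal (realc r n)) * μ (cyl X P m) := by
          rw [ENNReal.sub_mul (fun _ _ => measure_ne_top μ _), one_mul]
      _ = (1 - ENNReal.ofReal (realc r n)) * μ (Evt X n s m ∩ cyl X P m) := by
          rw [hEeq]
  · have hemp : Evt X n s m ∩ cyl X P m = ∅ := Set.not_nonempty_iff_eq_empty.mp hne
    have hnull : μ (Evt X n s m ∩ cyl X P m) = 0 := by
      rw [hemp]; exact measure_empty
    have h0 : μ ((Evt X n s m ∩ Aft X n m) ∩ cyl X P m) = 0 := by
      refine measure_mono_null ?_ hnull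
      rintro ω ⟨⟨hE, _⟩, hc⟩
      exact ⟨hE, hc⟩
    rw [h0, hnull, mul_zero]

lemma Rv_step (hr : ∀ n, 1 ≤ n → r n ∈ Set.Ioo (0 : ℝ) 1)
    (hX : IsBirthDeathChain μ X r k) (n : ℕ) (hn : 1 ≤ n) (s : ℕ) (hs : 1 ≤ s) :
    μ (Rv X n (s + 1)) ≤ (1 - ENNReal.ofReal (realc r n)) * μ (Rv X n s) := by
  calc μ (Rv X n (s + 1)) ≤ μ (⋃ m, (Evt X n s m ∩ Aft X n m)) :=
        measure_mono (Rv_succ_subset n s hs)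
    _ ≤ ∑' m, μ (Evt X n s m ∩ Aft X n m) := measure_iUnion_le _
    _ ≤ ∑' m, (1 - ENNReal.ofReal (realc r n)) * μ (Evt X n s m) :=
        ENNReal.tsum_le_tsum fun m => Evt_Aft_bound hr hX n hn s m
    _ = (1 - ENNReal.ofReal (realc r n)) * ∑' m, μ (Evt X n s m) :=
        ENNReal.tsum_mul_left
    _ = (1 - ENNReal.ofReal (realc r n)) * μ (Rv X n s) := by
        rw [← measure_iUnion (Evt_pairwise_disjoint n s)
          (fun m => Evt_measurable hX.meas n s m)]
        rfl

lemma Rv_pow (hr : ∀ n, 1 ≤ n → r n ∈ Set.Ioo (0 : ℝ) 1)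
    (hX : IsBirthDeathChain μ X r k) (n : ℕ) (hn : 1 ≤ n) (s : ℕ) :
    μ (Rv X n (s + 1)) ≤ (1 - ENNReal.ofReal (realc r n)) ^ s := by
  have := hX.isProb
  induction s with
  | zero => simpa using prob_le_one
  | succ s ih =>
      calc μ (Rv X n (s + 1 + 1))
          ≤ (1 - ENNReal.ofReal (realc r n)) * μ (Rv X n (s + 1)) :=
            Rv_step hr hX n hn (s + 1) (by omega)
        _ ≤ (1 - ENNReal.ofReal (realc r n)) * (1 - ENNReal.ofReal (realc r n)) ^ s :=
            mul_le_mul_right ih _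
        _ = (1 - ENNReal.ofReal (realc r n)) ^ (s + 1) := by rw [pow_succ, mul_comm]

lemma visCount_le_succ (n : ℕ) (ω : Ω) (i : ℕ) :
    visCount X n ω (i + 1) = visCount X n ω i + (if X (i + 1) ω = n then 1 else 0) := by
  unfold visCount
  rw [Finset.range_add_one, Finset.filter_insert]
  split
  · rw [Finset.card_insert_of_notMem (fun hmem => by
      have := Finset.mem_range.mp (Finset.mem_filter.mp hmem).1
      omega)]
  · rw [add_zero]

lemma Vset_subset_Rv (n s : ℕ) (hs : 1 ≤ s) : Vset X n ⊆ Rv X n s := by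
  rintro ω ⟨hz, hvis⟩
  -- step 1 : counts are unbounded
  have hub : ∀ s', ∃ i, s' ≤ visCount X n ω i := by
    intro s'
    induction s' with
    | zero => exact ⟨0, Nat.zero_le _⟩
    | succ s' ih =>
        obtain ⟨i, hi⟩ := ih
        obtain ⟨i', hi'1, hi'2⟩ := hvis (i + 1)
        refine ⟨i', ?_⟩
        have hsub : insert i' ((Finset.range (i + 1)).filter (fun j => X j ω = n))
            ⊆ (Finset.range (i' + 1)).filter (fun j => X j ω = n) := by
          intro j hj
          rcases Finset.mem_insert.mp hj with hj | hj
          · subst hj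
            exact Finset.mem_filter.mpr ⟨Finset.mem_range.mpr (by omega), hi'2⟩
          · have h1 := Finset.mem_filter.mp hj
            exact Finset.mem_filter.mpr ⟨Finset.mem_range.mpr (by
              have := Finset.mem_range.mp h1.1; omega), h1.2⟩
        have hnm : i' ∉ (Finset.range (i + 1)).filter (fun j => X j ω = n) := by
          intro hmem
          have := Finset.mem_range.mp (Finset.mem_filter.mp hmem).1
          omega
        have hcard := Finset.card_le_card hsub
        rw [Finset.card_insert_of_notMem hnm] at hcard
        unfold visCount
        unfold visCount at hi
        omega
  -- step 2 : find exact count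
  obtain ⟨i0, hi0⟩ := hub s
  have hfind : ∃ m, visCount X n ω m = s ∧ X m ω = n := by
    have hex : ∃ i, s ≤ visCount X n ω i := ⟨i0, hi0⟩
    classical
    obtain ⟨m, hm1, hmmin⟩ : ∃ m, s ≤ visCount X n ω m ∧
        ∀ m', m' < m → ¬ s ≤ visCount X n ω m' :=
      ⟨Nat.find hex, Nat.find_spec hex, fun m' h => Nat.find_min hex h⟩
    rcases Nat.eq_zero_or_pos m with h0 | h0
    · -- m = 0 : visCount 0 ≤ 1 so s = 1 = visCount, and X 0 = n
      have hv0 : visCount X n ω 0 ≤ 1 := by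
        unfold visCount
        calc ((Finset.range 1).filter (fun j => X j ω = n)).card
            ≤ (Finset.range 1).card := Finset.card_filter_le _ _
          _ = 1 := by simp
      rw [h0] at hm1
      have hs1 : visCount X n ω 0 = s := by omega
      have hpos : 0 < visCount X n ω 0 := by omega
      have hx0 : X 0 ω = n := by
        by_contra hne
        have : (Finset.range 1).filter (fun j => X j ω = n) = ∅ := by
          apply Finset.eq_empty_iff_forall_notMem.mpr
          intro j hj
          have h1 := Finset.mem_filter.mp hj
          have h2 := Finset.mem_range.mp h1.1
          interval_cases j
          · exact hne h1.2
        unfold visCount at hpos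
        rw [this] at hpos
        simp at hpos
      exact ⟨0, by rw [← h0] at hs1 ⊢; exact hs1, by rw [← h0] at hx0 ⊢; exact hx0⟩
    · obtain ⟨m', rfl⟩ : ∃ m', m = m' + 1 := ⟨m - 1, by omega⟩
      have hm2 : ¬ s ≤ visCount X n ω m' := hmmin m' (by omega)
      have hstep := visCount_le_succ (X := X) n ω m'
      by_cases hxm : X (m' + 1) ω = n
      · rw [if_pos hxm] at hstep
        exact ⟨m' + 1, by omega, hxm⟩
      · rw [if_neg hxm, add_zero] at hstep
        omega
  obtain ⟨m, hm1, hm2⟩ := hfind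
  exact Set.mem_iUnion.mpr ⟨m, hm1, hm2, fun j _ => hz j⟩

lemma Vset_null (hr : ∀ n, 1 ≤ n → r n ∈ Set.Ioo (0 : ℝ) 1)
    (hX : IsBirthDeathChain μ X r k) (n : ℕ) (hn : 1 ≤ n) :
    μ (Vset X n) = 0 := by
  have hq : (1 - ENNReal.ofReal (realc r n)) < 1 :=
    ENNReal.sub_lt_self ENNReal.one_ne_top one_ne_zero
      (ne_of_gt (ENNReal.ofReal_pos.mpr (realc_pos hr n)))
  have hb : ∀ s, μ (Vset X n) ≤ (1 - ENNReal.ofReal (realc r n)) ^ s := fun s =>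
    (measure_mono (Vset_subset_Rv n (s + 1) (by omega))).trans (Rv_pow hr hX n hn s)
  have htend := ENNReal.tendsto_pow_atTop_nhds_zero_of_lt_one hq
  have hle := ge_of_tendsto' htend hb
  exact le_antisymm hle zero_le
end Part6b

section Part7
variable {μ : Measure Ω} {X : ℕ → Ω → ℕ} {r : ℕ → ℝ} {k : ℕ}

lemma absorb_forever {ω : Ω} (hg : ω ∈ Good X k) {j0 : ℕ} (h0 : X j0 ω = 0) :
    ∀ d, X (j0 + d) ω = 0 := by
  intro d
  induction d with
  | zero => exact h0
  | succ d ih => exact (hg.2 (j0 + d)).1 ih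

lemma bounded_of_zero {ω : Ω} (hg : ω ∈ Good X k) {j0 : ℕ} (h0 : X j0 ω = 0) (i : ℕ) :
    X i ω ≤ (Finset.range (j0 + 1)).sup (fun j => X j ω) := by
  by_cases hi : i ≤ j0
  · exact Finset.le_sup (f := fun j => X j ω) (Finset.mem_range.mpr (by omega))
  · obtain ⟨d, rfl⟩ : ∃ d, i = j0 + d := ⟨i - j0, by omega⟩
    rw [absorb_forever hg h0 d]
    exact Nat.zero_le _

lemma mem_BN_of_reach {ω : Ω} (hg : ω ∈ Good X k) {N : ℕ} (hkN : k < N)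
    (hreach : ∃ i, N ≤ X i ω ∧ ∀ j < i, X j ω ≠ 0) :
    ω ∈ ⋃ m, Fev X N m := by
  classical
  obtain ⟨iw, hiw1, hiw2⟩ := hreach
  have hex : ∃ i, N ≤ X i ω := ⟨iw, hiw1⟩
  obtain ⟨i0, hspec, hmin, hi0le⟩ : ∃ i0, N ≤ X i0 ω ∧ (∀ j < i0, ¬ N ≤ X j ω) ∧
      i0 ≤ iw :=
    ⟨Nat.find hex, Nat.find_spec hex, fun j hj => Nat.find_min hex hj,
      Nat.find_min' hex hiw1⟩
  have hi0pos : 1 ≤ i0 := by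
    rcases Nat.eq_zero_or_pos i0 with h | h
    · exfalso
      rw [h] at hspec
      rw [hg.1] at hspec
      omega
    · exact h
  obtain ⟨m, rfl⟩ : ∃ m, i0 = m + 1 := ⟨i0 - 1, by omega⟩
  have hXm : 0 < X m ω := Nat.pos_of_ne_zero (hiw2 m (by omega))
  have hXmN : X m ω < N := by have := hmin m (by omega); omega
  have hup := (hg.2 m).2 hXm
  have hXm1 : X (m + 1) ω = N := by
    rcases hup with h | h <;> omega
  refine Set.mem_iUnion.mpr ⟨m, fun j hj => ?_, hXm1⟩
  refine ⟨Nat.pos_of_ne_zero (hiw2 j (by omega)), ?_⟩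
  have := hmin j (by omega)
  omega

lemma never_zero_of_tendsto {ω : Ω} (hg : ω ∈ Good X k)
    (hT : Tendsto (fun m => X m ω) atTop atTop) (j : ℕ) : X j ω ≠ 0 := by
  intro h0
  set B := (Finset.range (j + 1)).sup (fun j' => X j' ω) with hB
  obtain ⟨i, hi⟩ := (Filter.tendsto_atTop_atTop.mp hT) (B + 1)
  have h1 := hi i le_rfl
  have h2 := bounded_of_zero hg h0 i
  omega

lemma T_subset_iInter {ω : Ω} (hg : ω ∈ Good X k)
    (hT : Tendsto (fun m => X m ω) atTop atTop) (hk : 1 ≤ k) (j : ℕ) :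
    ω ∈ ⋃ m, Fev X (k + 1 + j) m := by
  apply mem_BN_of_reach hg (by omega)
  obtain ⟨i, hi⟩ := (Filter.tendsto_atTop_atTop.mp hT) (k + 1 + j)
  exact ⟨i, hi i le_rfl, fun j' _ => never_zero_of_tendsto hg hT j'⟩

lemma iInter_antitone_step {ω : Ω} (hg : ω ∈ Good X k) (hk : 1 ≤ k) {j j' : ℕ}
    (hjj : j ≤ j') (hω : ω ∈ ⋃ m, Fev X (k + 1 + j') m) :
    ω ∈ ⋃ m, Fev X (k + 1 + j) m := by
  obtain ⟨m, hm⟩ := Set.mem_iUnion.mp hω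
  apply mem_BN_of_reach hg (by omega)
  refine ⟨m + 1, by rw [hm.2]; omega, fun j'' hj'' => ?_⟩
  exact Nat.pos_iff_ne_zero.mp (hm.1 j'' (by omega)).1

lemma tendsto_of_iInter {ω : Ω} (hg : ω ∈ Good X k) (hk : 1 ≤ k)
    (hall : ∀ j : ℕ, ω ∈ ⋃ m, Fev X (k + 1 + j) m)
    (hV : ∀ n, 1 ≤ n → ω ∉ Vset X n) :
    Tendsto (fun m => X m ω) atTop atTop := by
  classical
  -- never zero
  have hz : ∀ j, X j ω ≠ 0 := by
    intro j h0
    set B := (Finset.range (j + 1)).sup (fun j' => X j' ω) with hB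
    obtain ⟨m, hm⟩ := Set.mem_iUnion.mp (hall (B + 1))
    have h1 : X (m + 1) ω = k + 1 + (B + 1) := hm.2
    have h2 := bounded_of_zero hg h0 (m + 1)
    omega
  rw [Filter.tendsto_atTop_atTop]
  by_contra hcon
  push_neg at hcon
  obtain ⟨b, hb⟩ := hcon
  -- some value < b is visited infinitely often
  have hpig : ∃ n, n < b ∧ ∀ M, ∃ i, M ≤ i ∧ X i ω = n := by
    by_contra hno
    push_neg at hno
    choose M hM using hno
    set MM := (Finset.range b).sup (fun n => if h : n < b then M n h else 0) with hMM
    obtain ⟨a, ha1, ha2⟩ := hb MM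
    have hab : X a ω < b := ha2
    have hMle : M (X a ω) hab ≤ MM := by
      have hmem : X a ω ∈ Finset.range b := Finset.mem_range.mpr hab
      have hle := Finset.le_sup (f := fun n => if h : n < b then M n h else 0) hmem
      rw [dif_pos hab] at hle
      exact hle
    exact hM (X a ω) hab a (by omega) rfl
  obtain ⟨n, hnb, hvis⟩ := hpig
  have hn1 : 1 ≤ n := by
    rcases Nat.eq_zero_or_pos n with h | h
    · obtain ⟨i, _, hi2⟩ := hvis 0
      rw [h] at hi2
      exact absurd hi2 (hz i)
    · exact h
  exact hV n hn1 ⟨hz, hvis⟩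

lemma T_measurable (hm : ∀ i, Measurable (X i)) :
    MeasurableSet {ω | Tendsto (fun m => X m ω) atTop atTop} := by
  have heq : {ω | Tendsto (fun m => X m ω) atTop atTop}
      = ⋂ b : ℕ, ⋃ i : ℕ, ⋂ a : ℕ, ⋂ (_ : i ≤ a), {ω | b ≤ X a ω} := by
    ext ω
    simp only [Set.mem_setOf_eq, Set.mem_iInter, Set.mem_iUnion, Filter.tendsto_atTop_atTop]
  rw [heq]
  refine MeasurableSet.iInter fun b => MeasurableSet.iUnion fun i =>
    MeasurableSet.iInter fun a => MeasurableSet.iInter fun _ => (hm a) trivial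

lemma measure_inter_good (hX : IsBirthDeathChain μ X r k) (hGnull : μ (Good X k)ᶜ = 0)
    (S : Set Ω) : μ (S ∩ Good X k) = μ S := by
  have h1 := measure_inter_add_diff (μ := μ) (t := Good X k) S
    (Good_measurable (k := k) hX.meas)
  have h2 : μ (S \ Good X k) = 0 :=
    measure_mono_null (fun ω hω => hω.2) hGnull
  rw [h2, add_zero] at h1
  exact h1

end Part7

end BDproof

open BDproof

/-- If `∑ tⱼ < ∞`, then with positive probability the chain tends to infinity (never goes
extinct), and this survival probability equals `(∑_{j=0}^{k−1} tⱼ)/(∑_{j=0}^∞ tⱼ)`. -/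
theorem survival_probability {Ω : Type*} [MeasurableSpace Ω] (μ : Measure Ω)
    (X : ℕ → Ω → ℕ) (r : ℕ → ℝ) (k : ℕ) (hk : 1 ≤ k)
    (hr : ∀ n, 1 ≤ n → r n ∈ Set.Ioo (0 : ℝ) 1)
    (hX : IsBirthDeathChain μ X r k)
    (t : ℕ → ℝ) (ht : ∀ n, t n = ∏ i ∈ Finset.Icc 1 n, ((1 - r i) / r i))
    (hsum : Summable t) :
    0 < μ {ω | Tendsto (fun m => X m ω) atTop atTop} ∧
      μ {ω | Tendsto (fun m => X m ω) atTop atTop}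
        = ENNReal.ofReal ((∑ j ∈ Finset.range k, t j) / (∑' j : ℕ, t j)) := by
  classical
  have hprob := hX.isProb
  have hpos : ∀ j, 0 < t j := by
    intro j
    rw [ht j]
    apply Finset.prod_pos
    intro i hi
    have h1 := hr i (Finset.mem_Icc.mp hi).1
    have h2 : 0 < 1 - r i := by linarith [h1.2]
    exact div_pos h2 h1.1
  have hrec : ∀ a, 1 ≤ a → r a * t a = (1 - r a) * t (a - 1) := by
    intro a ha
    obtain ⟨a', rfl⟩ : ∃ a', a = a' + 1 := ⟨a - 1, by omega⟩
    have h1 := hr (a' + 1) (by omega)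
    have hrne : r (a' + 1) ≠ 0 := ne_of_gt h1.1
    have e : t (a' + 1) = t a' * ((1 - r (a' + 1)) / r (a' + 1)) := by
      rw [ht (a' + 1), ht a', Finset.prod_Icc_succ_top (by omega : 1 ≤ a' + 1)]
    rw [Nat.add_sub_cancel, e]
    field_simp
  set T := {ω | Tendsto (fun m => X m ω) atTop atTop} with hTdef
  have hGnull : μ (Good X k)ᶜ = 0 := Good_null hr hX
  set W : ℕ → Set Ω := fun j => (⋃ m, Fev X (k + 1 + j) m) ∩ Good X k with hWdef
  have hWmeas : ∀ j, MeasurableSet (W j) := fun j =>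
    (MeasurableSet.iUnion fun m => Fev_measurable hX.meas _ m).inter
      (Good_measurable hX.meas)
  have hWanti : Antitone W := by
    intro j j' hjj
    rintro ω ⟨h1, h2⟩
    exact ⟨iInter_antitone_step h2 hk hjj h1, h2⟩
  have hWval : ∀ j, μ (W j) = ENNReal.ofReal (phi t k / phi t (k + 1 + j)) := by
    intro j
    rw [hWdef]
    simp only
    rw [measure_inter_good hX hGnull]
    exact hitN_measure hr hX hpos hrec hk (by omega)
  have htmeas : Tendsto (fun j => μ (W j)) atTop (𝓝 (μ (⋂ j, W j))) := by
    refine tendsto_measure_iInter_atTop (fun j => (hWmeas j).nullMeasurableSet) hWanti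
      ⟨0, measure_ne_top μ _⟩
  have hSpos : 0 < ∑' j, t j := by
    have h1 : t 0 ≤ ∑' j, t j := Summable.le_tsum hsum 0 (fun j _ => (hpos j).le)
    linarith [hpos 0]
  have hphi_tend : Tendsto (fun j : ℕ => phi t (k + 1 + j)) atTop (𝓝 (∑' i, t i)) := by
    have h2 : Tendsto (fun n : ℕ => ∑ i ∈ Finset.range n, t i) atTop (𝓝 (∑' i, t i)) :=
      hsum.hasSum.tendsto_sum_nat
    have h3 : Tendsto (fun j : ℕ => k + 1 + j) atTop atTop :=
      tendsto_atTop_mono (fun j => Nat.le_add_left j (k + 1)) tendsto_id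
    have h4 : (fun j : ℕ => phi t (k + 1 + j))
        = (fun n : ℕ => ∑ i ∈ Finset.range n, t i) ∘ (fun j : ℕ => k + 1 + j) := rfl
    rw [h4]
    exact h2.comp h3
  have hval_tend : Tendsto (fun j => ENNReal.ofReal (phi t k / phi t (k + 1 + j)))
      atTop (𝓝 (ENNReal.ofReal (phi t k / ∑' i, t i))) := by
    apply ENNReal.tendsto_ofReal
    exact Filter.Tendsto.div tendsto_const_nhds hphi_tend (ne_of_gt hSpos)
  have hiInter_val : μ (⋂ j, W j) = ENNReal.ofReal (phi t k / ∑' i, t i) := by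
    simp only [hWval] at htmeas
    exact tendsto_nhds_unique htmeas hval_tend
  have hTsub : T ∩ Good X k ⊆ ⋂ j, W j := by
    rintro ω ⟨hT1, hG1⟩
    exact Set.mem_iInter.mpr fun j => ⟨T_subset_iInter hG1 hT1 hk j, hG1⟩
  have hsup : (⋂ j, W j) ⊆ T ∪ (⋃ n, Vset X (n + 1)) := by
    intro ω hω
    by_cases hV : ∃ n, 1 ≤ n ∧ ω ∈ Vset X n
    · obtain ⟨n, hn1, hn2⟩ := hV
      right
      exact Set.mem_iUnion.mpr ⟨n - 1, by rwa [show n - 1 + 1 = n by omega]⟩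
    · left
      push_neg at hV
      have hω0 := Set.mem_iInter.mp hω 0
      have hGω : ω ∈ Good X k := hω0.2
      exact tendsto_of_iInter hGω hk (fun j => (Set.mem_iInter.mp hω j).1)
        (fun n hn h => hV n hn h)
  have hVnull : μ (⋃ n, Vset X (n + 1)) = 0 :=
    measure_iUnion_null fun n => Vset_null hr hX (n + 1) (by omega)
  have hμT : μ T = μ (⋂ j, W j) := by
    apply le_antisymm
    · calc μ T ≤ μ ((T ∩ Good X k) ∪ (Good X k)ᶜ) := measure_mono (fun ω hω => by
            by_cases h : ω ∈ Good X k
            · exact Or.inl ⟨hω, h⟩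
            · exact Or.inr h)
        _ ≤ μ (T ∩ Good X k) + μ (Good X k)ᶜ := measure_union_le _ _
        _ = μ (T ∩ Good X k) := by rw [hGnull, add_zero]
        _ ≤ μ (⋂ j, W j) := measure_mono hTsub
    · calc μ (⋂ j, W j) ≤ μ (T ∪ ⋃ n, Vset X (n + 1)) := measure_mono hsup
        _ ≤ μ T + μ (⋃ n, Vset X (n + 1)) := measure_union_le _ _
        _ = μ T := by rw [hVnull, add_zero]
  have hfinal : μ T = ENNReal.ofReal (phi t k / ∑' i, t i) := hμT.trans hiInter_val
  have hphikpos : 0 < phi t k :=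
    Finset.sum_pos (fun j _ => hpos j) (Finset.nonempty_range_iff.mpr (by omega))
  constructor
  · rw [hfinal]
    exact ENNReal.ofReal_pos.mpr (div_pos hphikpos hSpos)
  · exact hfinal
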